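/- For integers ℓ ≥ 1, m ≥ 1, and d with m + 1 ≤ d − ℓ, the strict inequality (m+1)·C(d,m)·C(d−ℓ+1,m+2) > m·C(d,m+1)·C(d−ℓ+1,m+1) holds if and only if ℓ·(m+1)² < d − m. Equivalently, the normalized per-node storage of the Type-II secure determinant codes satisfies α^(m)/F_{s,II}^(m) > α^(m+1)/F_{s,II}^(m+1) if and only if ℓ < (d+1−(m+1))/(m+1)². -/

import Mathlib

/-- For `ℓ ≥ 1`, `m ≥ 1`, `m + 1 ≤ d − ℓ`:
`(m+1)·C(d,m)·C(d−ℓ+1,m+2) > m·C(d,m+1)·C(d−ℓ+1,m+1)` holds iff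
`ℓ·(m+1)² < d − m`, i.e. the normalized per-node storage of Type-II secure
determinant codes satisfies `ᾱ^(m) > ᾱ^(m+1)` iff `ℓ < (d+1−(m+1))/(m+1)²`. -/
theorem typeII_normalized_alpha_decreasing_iff (d m ℓ : ℕ) (hℓ : 1 ≤ ℓ)
    (hm : 1 ≤ m) (h : m + 1 ≤ d - ℓ) :
    ((m + 1) * Nat.choose d m * Nat.choose (d - ℓ + 1) (m + 2)
        > m * Nat.choose d (m + 1) * Nat.choose (d - ℓ + 1) (m + 1))
      ↔ ℓ * (m + 1) ^ 2 < d - m := by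
  have hd : ℓ + m + 1 ≤ d := by omega
  have hA : 0 < Nat.choose d m := Nat.choose_pos (by omega)
  have hB : 0 < Nat.choose (d - ℓ + 1) (m + 1) := Nat.choose_pos (by omega)
  have e1 : Nat.choose d (m + 1) * (m + 1) = Nat.choose d m * (d - m) :=
    Nat.choose_succ_right_eq d m
  have e2 : Nat.choose (d - ℓ + 1) (m + 2) * (m + 2)
      = Nat.choose (d - ℓ + 1) (m + 1) * (d - ℓ - m) := by
    have := Nat.choose_succ_right_eq (d - ℓ + 1) (m + 1)
    have hx : d - ℓ + 1 - (m + 1) = d - ℓ - m := by omega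
    rwa [hx] at this
  set A := Nat.choose d m with hAdef
  set B := Nat.choose (d - ℓ + 1) (m + 1) with hBdef
  set C1 := Nat.choose d (m + 1)
  set C2 := Nat.choose (d - ℓ + 1) (m + 2)
  have key : ((m + 1) * A * C2 > m * C1 * B)
      ↔ ((m + 1) ^ 2 * (d - ℓ - m) > m * (m + 2) * (d - m)) := by
    simp only [gt_iff_lt]
    rw [← mul_lt_mul_iff_of_pos_right (show 0 < (m + 1) * (m + 2) by positivity)]
    have l1 : (m : ℕ) * C1 * B * ((m + 1) * (m + 2))
        = m * (m + 2) * (d - m) * (A * B) := by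
      calc (m : ℕ) * C1 * B * ((m + 1) * (m + 2))
          = m * (m + 2) * (C1 * (m + 1)) * B := by ring
        _ = m * (m + 2) * (A * (d - m)) * B := by rw [e1]
        _ = m * (m + 2) * (d - m) * (A * B) := by ring
    have l2 : ((m : ℕ) + 1) * A * C2 * ((m + 1) * (m + 2))
        = (m + 1) ^ 2 * (d - ℓ - m) * (A * B) := by
      calc ((m : ℕ) + 1) * A * C2 * ((m + 1) * (m + 2))
          = (m + 1) ^ 2 * A * (C2 * (m + 2)) := by ring
        _ = (m + 1) ^ 2 * A * (B * (d - ℓ - m)) := by rw [e2]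
        _ = (m + 1) ^ 2 * (d - ℓ - m) * (A * B) := by ring
    rw [l1, l2]
    exact mul_lt_mul_iff_of_pos_right (by positivity)
  rw [key]
  -- arithmetic part
  have hx : d - m = (d - ℓ - m) + ℓ := by omega
  rw [hx]
  set z := d - ℓ - m with hz
  have hz1 : 1 ≤ z := by omega
  constructor
  · intro hlt
    nlinarith [hlt]
  · intro hlt
    nlinarith [hlt]
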